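/- arXiv:1009.2366 — 2 statements merged into one kernel-verified Lean document; each statement's English description precedes it below -/
import Mathlib

section
/- For any v ∈ ℕ^N, σ_{vΨ} = σ_v θ, where vΨ = (v[2], ..., v[N], v[1]+1) and θ is the cyclic permutation sending i to i+1 for i < N and N to 1 (i.e., θ = [2, 3, ..., N, 1]). -/
/-- `σ` is an adjacent transposition `s_i = (i, i+1)`. -/
def IsAdjTrans {N : ℕ} (σ : Equiv.Perm (Fin N)) : Prop :=
  ∃ i j : Fin N, (j : ℕ) = (i : ℕ) + 1 ∧ σ = Equiv.swap i j

/-- The length of a permutation: the minimal number of adjacent transpositions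
needed to write it. -/
noncomputable def permLength {N : ℕ} (σ : Equiv.Perm (Fin N)) : ℕ :=
  sInf {k | ∃ l : List (Equiv.Perm (Fin N)),
    l.length = k ∧ (∀ τ ∈ l, IsAdjTrans τ) ∧ l.prod = σ}

/-- `σ` is the (unique) minimal-length permutation with `v = w ∘ σ`, where `w`
is weakly decreasing, i.e. `w = v⁺` and `σ = σ_v`. -/
def IsMinDecomp {N : ℕ} (v w : Fin N → ℕ) (σ : Equiv.Perm (Fin N)) : Prop :=
  (∀ i j : Fin N, i ≤ j → w j ≤ w i) ∧ (v = fun k => w (σ k)) ∧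
  ∀ σ' : Equiv.Perm (Fin N), (v = fun k => w (σ' k)) →
    permLength σ ≤ permLength σ'

/-- The affine operation `vΨ = (v[2], ..., v[N], v[1] + 1)`. -/
def vPsi {n : ℕ} (v : Fin (n + 1) → ℕ) : Fin (n + 1) → ℕ :=
  fun k => if h : (k : ℕ) + 1 < n + 1 then v ⟨(k : ℕ) + 1, h⟩ else v 0 + 1

/-- Inversion set of a permutation of `Fin N`. -/
def invSet {N : ℕ} (σ : Equiv.Perm (Fin N)) : Finset (Fin N × Fin N) :=
  Finset.univ.filter fun p => p.1 < p.2 ∧ σ p.2 < σ p.1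

/-- Inversion count. -/
def invCount {N : ℕ} (σ : Equiv.Perm (Fin N)) : ℕ := (invSet σ).card

lemma swap_adj_val {N : ℕ} {i j : Fin N} (hij : (j : ℕ) = (i : ℕ) + 1) (x : Fin N) :
    ((Equiv.swap i j x : Fin N) : ℕ) =
      if (x : ℕ) = (i : ℕ) then (j : ℕ) else if (x : ℕ) = (j : ℕ) then (i : ℕ) else (x : ℕ) := by
  rcases eq_or_ne x i with rfl | hxi
  · rw [Equiv.swap_apply_left, if_pos rfl]
  · rcases eq_or_ne x j with rfl | hxj
    · rw [Equiv.swap_apply_right, if_neg (by omega), if_pos rfl]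
    · rw [Equiv.swap_apply_of_ne_of_ne hxi hxj,
        if_neg (fun h => hxi (Fin.ext h)), if_neg (fun h => hxj (Fin.ext h))]

lemma swap_adj_lt_iff {N : ℕ} {i j : Fin N} (hij : (j : ℕ) = (i : ℕ) + 1) {a b : Fin N}
    (h1 : ¬(a = i ∧ b = j)) (h2 : ¬(a = j ∧ b = i)) :
    Equiv.swap i j a < Equiv.swap i j b ↔ a < b := by
  simp only [Fin.ext_iff] at h1 h2
  rw [Fin.lt_def, Fin.lt_def, swap_adj_val hij a, swap_adj_val hij b]
  split_ifs <;> omega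

lemma invCount_mul_swap_of_lt {N : ℕ} {σ : Equiv.Perm (Fin N)} {i j : Fin N}
    (hij : (j : ℕ) = (i : ℕ) + 1) (h : σ i < σ j) :
    invCount (σ * Equiv.swap i j) = invCount σ + 1 := by
  have hijlt : i < j := by rw [Fin.lt_def]; omega
  have hne : i ≠ j := ne_of_lt hijlt
  unfold invCount
  have hB : (invSet (σ * Equiv.swap i j)).card =
      (Finset.univ.filter fun q : Fin N × Fin N =>
        Equiv.swap i j q.1 < Equiv.swap i j q.2 ∧ σ q.2 < σ q.1).card := by
    apply Finset.card_equiv (Equiv.prodCongr (Equiv.swap i j) (Equiv.swap i j))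
    rintro ⟨a, b⟩
    simp only [invSet, Finset.mem_filter, Finset.mem_univ, true_and]
    simp [invSet, Equiv.Perm.mul_apply, Equiv.swap_apply_self]
  rw [hB]
  have hset : (Finset.univ.filter fun q : Fin N × Fin N =>
      Equiv.swap i j q.1 < Equiv.swap i j q.2 ∧ σ q.2 < σ q.1)
      = insert (j, i) (invSet σ) := by
    ext ⟨a, b⟩
    simp only [Finset.mem_filter, Finset.mem_univ, true_and, Finset.mem_insert, invSet,
      Prod.mk.injEq]
    by_cases hab1 : a = i ∧ b = j
    · obtain ⟨rfl, rfl⟩ := hab1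
      simp only [Equiv.swap_apply_left, Equiv.swap_apply_right]
      constructor
      · rintro ⟨h1, -⟩; exact absurd h1 (not_lt.2 (le_of_lt hijlt))
      · rintro (⟨e1, -⟩ | ⟨-, h2⟩)
        · exact absurd e1 hne
        · exact absurd h2 (not_lt.2 (le_of_lt h))
    · by_cases hab2 : a = j ∧ b = i
      · obtain ⟨rfl, rfl⟩ := hab2
        simp only [Equiv.swap_apply_left, Equiv.swap_apply_right]
        simp [hijlt, h]
      · rw [swap_adj_lt_iff hij hab1 hab2]
        constructor
        · rintro ⟨h1', h2'⟩; exact Or.inr ⟨h1', h2'⟩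
        · rintro (⟨rfl, rfl⟩ | hmem)
          · exact absurd ⟨rfl, rfl⟩ hab2
          · exact hmem
  rw [hset, Finset.card_insert_of_notMem]
  simp only [invSet, Finset.mem_filter, Finset.mem_univ, true_and, not_and]
  intro hji
  exact absurd hji (not_lt.2 (le_of_lt hijlt))

lemma invCount_mul_swap_of_gt {N : ℕ} {σ : Equiv.Perm (Fin N)} {i j : Fin N}
    (hij : (j : ℕ) = (i : ℕ) + 1) (h : σ j < σ i) :
    invCount (σ * Equiv.swap i j) + 1 = invCount σ := by
  have h' : (σ * Equiv.swap i j) i < (σ * Equiv.swap i j) j := by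
    simp only [Equiv.Perm.mul_apply, Equiv.swap_apply_left, Equiv.swap_apply_right]
    exact h
  have := invCount_mul_swap_of_lt hij h'
  rw [mul_assoc, Equiv.swap_mul_self, mul_one] at this
  exact this.symm

lemma invCount_inv {N : ℕ} (σ : Equiv.Perm (Fin N)) : invCount σ⁻¹ = invCount σ := by
  unfold invCount
  apply Finset.card_equiv ((Equiv.prodComm _ _).trans (Equiv.prodCongr σ⁻¹ σ⁻¹))
  rintro ⟨a, b⟩
  simp only [invSet, Finset.mem_filter, Finset.mem_univ, true_and, Equiv.trans_apply,
    Equiv.prodComm_apply, Prod.swap_prod_mk, Equiv.prodCongr_apply, Prod.map_apply,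
    Equiv.Perm.inv_def, Equiv.apply_symm_apply]
  constructor
  · rintro ⟨h1, h2⟩; exact ⟨h2, h1⟩
  · rintro ⟨h1, h2⟩; exact ⟨h2, h1⟩

/-- Somewhere between `a` and `b` there is an adjacent descent. -/
lemma exists_adj_descent_between {α : Type*} [LinearOrder α] {N : ℕ} (f : Fin N → α) :
    ∀ (d : ℕ) (a b : Fin N), (b : ℕ) = (a : ℕ) + d → f b < f a →
    ∃ i j : Fin N, a ≤ i ∧ j ≤ b ∧ (j : ℕ) = (i : ℕ) + 1 ∧ f j < f i := by
  intro d
  induction d with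
  | zero =>
    intro a b hb hf
    have : a = b := Fin.ext (by omega)
    subst this
    exact absurd hf (lt_irrefl _)
  | succ d ih =>
    intro a b hb hf
    have ha1 : (a : ℕ) + 1 < N := by have := b.isLt; omega
    set a' : Fin N := ⟨(a : ℕ) + 1, ha1⟩ with ha'
    by_cases hfa : f a' < f a
    · exact ⟨a, a', le_refl a, by rw [Fin.le_def]; simp [ha']; omega, rfl, hfa⟩
    · obtain ⟨i, j, h1, h2, h3, h4⟩ := ih a' b (by simp [ha']; omega)
        (lt_of_lt_of_le hf (not_lt.1 hfa))
      exact ⟨i, j, le_trans (by rw [Fin.le_def]; simp [ha']) h1, h2, h3, h4⟩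

lemma perm_eq_one_of_strictMono {N : ℕ} {σ : Equiv.Perm (Fin N)} (h : StrictMono σ) :
    σ = 1 := by
  have h2 : StrictMono (id : Fin N → Fin N) := strictMono_id
  have hinst : WellFoundedLT (Fin N) := inferInstance
  have h3 := @StrictMono.range_inj (Fin N) (Fin N) inferInstance inferInstance hinst (⇑σ)
    (id : Fin N → Fin N) h h2
  have : ⇑σ = (id : Fin N → Fin N) := h3.1 (by rw [σ.surjective.range_eq, Set.range_id])
  exact Equiv.ext fun x => congrFun this x

lemma exists_word {N : ℕ} (σ : Equiv.Perm (Fin N)) :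
    ∃ l : List (Equiv.Perm (Fin N)),
      l.length = invCount σ ∧ (∀ τ ∈ l, IsAdjTrans τ) ∧ l.prod = σ := by
  generalize hk : invCount σ = k
  induction k generalizing σ with
  | zero =>
    have hmono : StrictMono σ := by
      intro a b hab
      have hnot : (a, b) ∉ invSet σ := by
        unfold invCount at hk
        rw [Finset.card_eq_zero] at hk
        simp [hk]
      simp only [invSet, Finset.mem_filter, Finset.mem_univ, true_and, not_and] at hnot
      have h1 : ¬ σ b < σ a := fun hc => hnot hab hc
      exact lt_of_le_of_ne (not_lt.1 h1) fun e => (ne_of_lt hab) (σ.injective e)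
    refine ⟨[], rfl, by simp, ?_⟩
    rw [perm_eq_one_of_strictMono hmono, List.prod_nil]
  | succ k ih =>
    have hne : (invSet σ).Nonempty := by
      rw [← Finset.card_pos]; unfold invCount at hk; omega
    obtain ⟨⟨a, b⟩, hab⟩ := hne
    simp only [invSet, Finset.mem_filter, Finset.mem_univ, true_and] at hab
    obtain ⟨hab1, hab2⟩ := hab
    obtain ⟨i, j, -, -, hij, hd⟩ :=
      exists_adj_descent_between σ ((b : ℕ) - (a : ℕ)) a b
        (by rw [Fin.lt_def] at hab1; omega) hab2
    have hstep := invCount_mul_swap_of_gt hij hd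
    obtain ⟨l, hl, hadj, hprod⟩ := ih (σ * Equiv.swap i j) (by omega)
    refine ⟨l ++ [Equiv.swap i j], by simp [hl], ?_, ?_⟩
    · intro τ hτ
      rcases List.mem_append.1 hτ with hmem | hmem
      · exact hadj τ hmem
      · rw [List.mem_singleton] at hmem
        exact ⟨i, j, hij, hmem⟩
    · rw [List.prod_append, List.prod_singleton, hprod, mul_assoc, Equiv.swap_mul_self, mul_one]

lemma invCount_one {N : ℕ} : invCount (1 : Equiv.Perm (Fin N)) = 0 := by
  unfold invCount
  unfold invSet
  rw [Finset.card_eq_zero, Finset.filter_eq_empty_iff]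
  rintro p - ⟨h1, h2⟩
  simp only [Equiv.Perm.one_apply] at h2
  exact absurd h2 (not_lt.2 (le_of_lt h1))

lemma invCount_prod_le {N : ℕ} (l : List (Equiv.Perm (Fin N)))
    (h : ∀ τ ∈ l, IsAdjTrans τ) : invCount l.prod ≤ l.length := by
  induction l with
  | nil => simp [invCount_one]
  | cons t l ih =>
    obtain ⟨i, j, hij, rfl⟩ := h t (List.mem_cons_self (a := t) (l := l))
    have hrest := ih fun τ hτ => h τ (List.mem_cons_of_mem _ hτ)
    rw [List.prod_cons]
    set ρ := l.prod
    have key : invCount (Equiv.swap i j * ρ) ≤ invCount ρ + 1 := by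
      have h1 : Equiv.swap i j * ρ = (ρ⁻¹ * Equiv.swap i j)⁻¹ := by
        rw [mul_inv_rev, Equiv.swap_inv, inv_inv]
      rw [h1, invCount_inv]
      rcases lt_trichotomy (ρ⁻¹ i) (ρ⁻¹ j) with hc | hc | hc
      · rw [invCount_mul_swap_of_lt hij hc, invCount_inv]
      · exact absurd (congrArg Fin.val (Equiv.injective ρ⁻¹ hc)) (by omega)
      · have := invCount_mul_swap_of_gt hij hc
        rw [invCount_inv] at this
        omega
    calc invCount (Equiv.swap i j * ρ) ≤ invCount ρ + 1 := key
    _ ≤ l.length + 1 := by omega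
    _ = (Equiv.swap i j :: l).length := by simp

lemma permLength_eq_invCount {N : ℕ} (σ : Equiv.Perm (Fin N)) :
    permLength σ = invCount σ := by
  apply le_antisymm
  · obtain ⟨l, hl, hadj, hprod⟩ := exists_word σ
    exact Nat.sInf_le ⟨l, hl, hadj, hprod⟩
  · have hne : {k | ∃ l : List (Equiv.Perm (Fin N)),
        l.length = k ∧ (∀ τ ∈ l, IsAdjTrans τ) ∧ l.prod = σ}.Nonempty := by
      obtain ⟨l, hl, hadj, hprod⟩ := exists_word σ
      exact ⟨invCount σ, l, hl, hadj, hprod⟩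
    obtain ⟨l, hl, hadj, hprod⟩ := Nat.sInf_mem hne
    rw [permLength, ← hl, ← hprod]
    exact invCount_prod_le l hadj

/-- A minimal-length decomposition is "stable": equal entries stay in order. -/
lemma stable_of_isMinDecomp {N : ℕ} {v w : Fin N → ℕ} {σ : Equiv.Perm (Fin N)}
    (h : IsMinDecomp v w σ) :
    ∀ i j : Fin N, i < j → v i = v j → σ i < σ j := by
  obtain ⟨hw, hv, hmin⟩ := h
  intro i j hij hvij
  by_contra hc
  have hne : σ j ≠ σ i := fun e => (ne_of_lt hij) (σ.injective e.symm)
  have hlt : σ j < σ i := lt_of_le_of_ne (not_lt.1 hc) hne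
  obtain ⟨i', j', h1, h2, hij', hd⟩ :=
    exists_adj_descent_between (fun m => σ⁻¹ m) (((σ i : ℕ)) - ((σ j : ℕ))) (σ j) (σ i)
      (by rw [Fin.lt_def] at hlt; omega)
      (by simp only [Equiv.Perm.inv_def, Equiv.symm_apply_apply]; exact hij)
  have hvj : v j = w (σ j) := congrFun hv j
  have hvi : v i = w (σ i) := congrFun hv i
  have hw_eq : w i' = w j' := by
    have e1 : w i' ≤ w (σ j) := hw _ _ h1
    have e2 : w (σ i) ≤ w j' := hw _ _ h2
    have e3 : w j' ≤ w i' := hw _ _ (by rw [Fin.le_def]; omega)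
    omega
  set σ₂ := Equiv.swap i' j' * σ with hσ₂
  have hv₂ : v = fun k => w (σ₂ k) := by
    funext k
    show v k = w (Equiv.swap i' j' (σ k))
    rcases eq_or_ne (σ k) i' with e | e1
    · rw [e, Equiv.swap_apply_left, ← hw_eq, ← e, ← congrFun hv k]
    · rcases eq_or_ne (σ k) j' with e | e2
      · rw [e, Equiv.swap_apply_right, hw_eq, ← e, ← congrFun hv k]
      · rw [Equiv.swap_apply_of_ne_of_ne e1 e2, ← congrFun hv k]
  have hcount : invCount σ₂ + 1 = invCount σ := by
    have h1' : σ₂⁻¹ = σ⁻¹ * Equiv.swap i' j' := by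
      rw [hσ₂, mul_inv_rev, Equiv.swap_inv]
    have := invCount_mul_swap_of_gt (σ := σ⁻¹) hij' hd
    rw [← h1', invCount_inv, invCount_inv] at this
    exact this
  have hlen : permLength σ₂ < permLength σ := by
    rw [permLength_eq_invCount, permLength_eq_invCount]; omega
  exact absurd (hmin σ₂ hv₂) (not_le.2 hlen)

/-- Uniqueness of stable decompositions. -/
lemma stable_unique {N : ℕ} {v w w₂ : Fin N → ℕ} {σ σ₂ : Equiv.Perm (Fin N)}
    (hw : ∀ i j : Fin N, i ≤ j → w j ≤ w i) (hw₂ : ∀ i j : Fin N, i ≤ j → w₂ j ≤ w₂ i)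
    (h1 : v = fun k => w (σ k)) (h2 : v = fun k => w₂ (σ₂ k))
    (s1 : ∀ i j : Fin N, i < j → v i = v j → σ i < σ j)
    (s2 : ∀ i j : Fin N, i < j → v i = v j → σ₂ i < σ₂ j) :
    σ = σ₂ := by
  have key : StrictMono (σ * σ₂⁻¹) := by
    intro a b hab
    simp only [Equiv.Perm.mul_apply]
    set i := σ₂⁻¹ a with hi
    set j := σ₂⁻¹ b with hj
    have hia : σ₂ i = a := by rw [hi]; exact σ₂.apply_symm_apply a
    have hjb : σ₂ j = b := by rw [hj]; exact σ₂.apply_symm_apply b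
    have hne : i ≠ j := fun e => (ne_of_lt hab) (by rw [← hia, ← hjb, e])
    rcases lt_trichotomy (v i) (v j) with hv | hv | hv
    · -- w₂ (σ₂ i) < w₂ (σ₂ j) so σ₂ j < σ₂ i, i.e. b < a, contradiction
      exfalso
      have : w₂ (σ₂ i) < w₂ (σ₂ j) := by
        rw [← congrFun h2 i, ← congrFun h2 j]; exact hv
      have : σ₂ j < σ₂ i := by
        by_contra hcc
        exact absurd (hw₂ _ _ (not_lt.1 hcc)) (not_le.2 this)
      rw [hia, hjb] at this
      exact absurd hab (not_lt.2 (le_of_lt this))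
    · rcases lt_trichotomy i j with hij | hij | hij
      · exact s1 i j hij hv
      · exact absurd hij hne
      · exfalso
        have := s2 j i hij hv.symm
        rw [hia, hjb] at this
        exact absurd hab (not_lt.2 (le_of_lt this))
    · -- v i > v j : w (σ i) > w (σ j) so σ i < σ j
      have : w (σ j) < w (σ i) := by
        rw [← congrFun h1 i, ← congrFun h1 j]; exact hv
      by_contra hcc
      exact absurd (hw _ _ (not_lt.1 hcc)) (not_le.2 this)
  have := perm_eq_one_of_strictMono key
  have h3 : σ * σ₂⁻¹ * σ₂ = 1 * σ₂ := by rw [this]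
  rwa [inv_mul_cancel_right, one_mul] at h3


/-- `σ_{vΨ} = σ_v θ` where `θ = [2, 3, ..., N, 1]` (the rotation `finRotate`),
composition being `(σθ)[i] = σ[θ[i]]`. -/
theorem sigma_of_affine {n : ℕ} (v w w' : Fin (n + 1) → ℕ)
    (σ σ' : Equiv.Perm (Fin (n + 1)))
    (hσ : IsMinDecomp v w σ) (hσ' : IsMinDecomp (vPsi v) w' σ') :
    σ' = σ * finRotate (n + 1) := by
  have hw := hσ.1
  have hv := hσ.2.1
  have sσ := stable_of_isMinDecomp hσ
  have sσ' := stable_of_isMinDecomp hσ'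
  set θ := finRotate (n + 1) with hθdef
  set m₀ := σ 0 with hm₀
  set w'' : Fin (n + 1) → ℕ := fun m => if m = m₀ then w m + 1 else w m with hw''def
  have hθ : ∀ k : Fin (n + 1), (σ * θ) k = σ (k + 1) := by
    intro k
    rw [Equiv.Perm.mul_apply, hθdef, finRotate_succ_apply]
  -- key fact: everything before m₀ has strictly bigger w-value
  have hkey : ∀ a : Fin (n + 1), a < m₀ → w m₀ < w a := by
    intro a ha
    have h1 : w m₀ ≤ w a := hw _ _ (le_of_lt ha)
    rcases lt_or_eq_of_le h1 with h | h
    · exact h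
    · exfalso
      set i := σ⁻¹ a with hi
      have hia : σ i = a := σ.apply_symm_apply a
      have hi0 : i ≠ 0 := by
        intro e
        rw [e] at hia
        exact absurd ha (by rw [← hia, ← hm₀]; exact lt_irrefl _)
      have hvi : v 0 = v i := by
        rw [congrFun hv i, congrFun hv 0, hia, ← hm₀, ← h]
      have : σ 0 < σ i := sσ 0 i (Fin.pos_of_ne_zero hi0) hvi
      rw [hia, ← hm₀] at this
      exact absurd ha (not_lt.2 (le_of_lt this))
  have hw'' : ∀ a b : Fin (n + 1), a ≤ b → w'' b ≤ w'' a := by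
    intro a b hab
    show (if b = m₀ then w b + 1 else w b) ≤ (if a = m₀ then w a + 1 else w a)
    by_cases hbm : b = m₀
    · by_cases ham : a = m₀
      · have : a = b := by rw [hbm, ham]
        rw [this]
      · rw [if_pos hbm, if_neg ham]
        have h4 : a < m₀ := lt_of_le_of_ne (hbm ▸ hab) ham
        have := hkey a h4
        rw [hbm]
        omega
    · by_cases ham : a = m₀
      · rw [if_neg hbm, if_pos ham]
        have := hw _ _ hab
        omega
      · rw [if_neg hbm, if_neg ham]
        exact hw _ _ hab
  have hdec : vPsi v = fun k => w'' ((σ * θ) k) := by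
    funext k
    rw [hθ k]
    by_cases hk : (k : ℕ) + 1 < n + 1
    · have hklt : k < Fin.last n := by rw [Fin.lt_def]; simp [Fin.last]; omega
      have hk1 : ((k + 1 : Fin (n + 1)) : ℕ) = (k : ℕ) + 1 := Fin.val_add_one_of_lt hklt
      have hne0 : (k + 1 : Fin (n + 1)) ≠ 0 := by
        intro e
        have := congrArg Fin.val e
        rw [hk1] at this
        simp only [Fin.val_zero] at this
        omega
      have hnem : σ (k + 1) ≠ m₀ := fun e => hne0 (σ.injective (by rw [e, hm₀]))
      simp only [vPsi, dif_pos hk]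
      show v _ = if σ (k + 1) = m₀ then w (σ (k + 1)) + 1 else w (σ (k + 1))
      rw [if_neg hnem]
      have hkeq : (⟨(k : ℕ) + 1, hk⟩ : Fin (n + 1)) = k + 1 := by
        rw [Fin.ext_iff]; simp [hk1]
      rw [hkeq, congrFun hv (k + 1)]
    · have hklast : k = Fin.last n := by
        rw [Fin.ext_iff]; simp [Fin.last]; have := k.isLt; omega
      have hk0 : k + 1 = 0 := by rw [hklast, Fin.last_add_one]
      simp only [vPsi, dif_neg hk]
      rw [hk0]
      show v 0 + 1 = if σ 0 = m₀ then w (σ 0) + 1 else w (σ 0)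
      rw [if_pos hm₀.symm, congrFun hv 0]
  have s2 : ∀ i j : Fin (n + 1), i < j → vPsi v i = vPsi v j → (σ * θ) i < (σ * θ) j := by
    intro i j hij hvij
    have hiub : (i : ℕ) < (j : ℕ) := hij
    have hjub := j.isLt
    have hi : (i : ℕ) + 1 < n + 1 := by omega
    have hiklt : i < Fin.last n := by rw [Fin.lt_def]; simp [Fin.last]; omega
    have hi1 : ((i + 1 : Fin (n + 1)) : ℕ) = (i : ℕ) + 1 := Fin.val_add_one_of_lt hiklt
    rw [hθ i, hθ j]
    by_cases hj : (j : ℕ) + 1 < n + 1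
    · have hjklt : j < Fin.last n := by rw [Fin.lt_def]; simp [Fin.last]; omega
      have hj1 : ((j + 1 : Fin (n + 1)) : ℕ) = (j : ℕ) + 1 := Fin.val_add_one_of_lt hjklt
      apply sσ (i + 1) (j + 1) (by rw [Fin.lt_def, hi1, hj1]; omega)
      simp only [vPsi, dif_pos hi, dif_pos hj] at hvij
      have e1 : (⟨(i : ℕ) + 1, hi⟩ : Fin (n + 1)) = i + 1 := by rw [Fin.ext_iff]; simp [hi1]
      have e2 : (⟨(j : ℕ) + 1, hj⟩ : Fin (n + 1)) = j + 1 := by rw [Fin.ext_iff]; simp [hj1]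
      rwa [e1, e2] at hvij
    · have hjlast : j = Fin.last n := by
        rw [Fin.ext_iff]; simp [Fin.last]; omega
      have hj0 : j + 1 = 0 := by rw [hjlast, Fin.last_add_one]
      rw [hj0]
      simp only [vPsi, dif_pos hi, dif_neg hj] at hvij
      have e1 : (⟨(i : ℕ) + 1, hi⟩ : Fin (n + 1)) = i + 1 := by rw [Fin.ext_iff]; simp [hi1]
      rw [e1] at hvij
      -- hvij : v (i+1) = v 0 + 1
      have hgt : w (σ 0) < w (σ (i + 1)) := by
        rw [← congrFun hv (i + 1), ← congrFun hv 0]; omega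
      by_contra hcc
      exact absurd (hw _ _ (not_lt.1 hcc)) (not_le.2 hgt)
  exact stable_unique hσ'.1 hw'' hσ'.2.1 hdec sσ' s2
end

section
/- In the Yang–Baxter graph G_λ, every directed path from the root (labeled by the zero weight 0^N) to a vertex with weight v has the same number of 'steps', namely |v| + S(v), where |v| = Σ_i v[i] and S(v) = Σ_{i<j} ε(v[i] − v[j]) with ε(x) = (|x| + |x+1| − 1)/2. In particular all paths joining two given vertices have the same length. -/
/-- `ε(x) = (|x| + |x+1| − 1)/2`. -/
def epsInt (x : ℤ) : ℤ := (|x| + |x + 1| - 1) / 2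

/-- `S(v) = Σ_{1 ≤ i < j ≤ N} ε(v[i] − v[j])`. -/
def Sstat {N : ℕ} (v : Fin N → ℕ) : ℤ :=
  ∑ p ∈ Finset.univ.filter (fun p : Fin N × Fin N => p.1 < p.2),
    epsInt ((v p.1 : ℤ) - (v p.2 : ℤ))

/-- A `step` of the Yang–Baxter graph on the weight labels: either `v ↦ v s_m`
with `v[m] < v[m+1]`, or the affine step `v ↦ vΨ`.  (Jump edges do not change
the weight.) -/
def WStep {n : ℕ} (v v' : Fin (n + 1) → ℕ) : Prop :=
  (∃ m j : Fin (n + 1), (j : ℕ) = (m : ℕ) + 1 ∧ v m < v j ∧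
      v' = fun k => v (Equiv.swap m j k)) ∨
  v' = vPsi v

/-! ### Auxiliary lemmas -/

lemma epsInt_sub_one (x : ℤ) : epsInt (x - 1) = epsInt (-x) := by
  unfold epsInt
  rw [abs_neg, show -x + 1 = -(x - 1) by ring, abs_neg]
  congr 1
  ring

lemma epsInt_pos_eq (x : ℤ) (h : 0 < x) : epsInt x = epsInt (-x) + 1 := by
  unfold epsInt
  rw [abs_of_pos h, abs_of_pos (by omega : (0:ℤ) < x + 1), abs_neg, abs_of_pos h,
    abs_of_nonpos (by omega : -x + 1 ≤ 0)]
  omega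

/-- The set of strictly increasing pairs. -/
def Ppairs (N : ℕ) : Finset (Fin N × Fin N) :=
  Finset.univ.filter (fun p : Fin N × Fin N => p.1 < p.2)

lemma mem_Ppairs {N : ℕ} (p : Fin N × Fin N) : p ∈ Ppairs N ↔ p.1 < p.2 := by
  simp [Ppairs]

/-- The action of a permutation on ordered pairs. -/
def emap {N : ℕ} (σ : Equiv.Perm (Fin N)) (p : Fin N × Fin N) : Fin N × Fin N :=
  if σ p.1 < σ p.2 then (σ p.1, σ p.2) else (σ p.2, σ p.1)

lemma emap_mem {N : ℕ} (σ : Equiv.Perm (Fin N)) {p : Fin N × Fin N}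
    (hp : p ∈ Ppairs N) : emap σ p ∈ Ppairs N := by
  rw [mem_Ppairs] at hp ⊢
  unfold emap
  split_ifs with h
  · exact h
  · exact lt_of_le_of_ne (not_lt.mp h)
      (fun he => (ne_of_lt hp) (σ.injective he).symm)

lemma emap_emap {N : ℕ} (σ : Equiv.Perm (Fin N)) {a b : Fin N}
    (hp : a < b) : emap σ⁻¹ (emap σ (a, b)) = (a, b) := by
  show emap σ⁻¹ (if σ a < σ b then (σ a, σ b) else (σ b, σ a)) = (a, b)
  by_cases h : σ a < σ b
  · rw [if_pos h]
    show (if σ⁻¹ (σ a) < σ⁻¹ (σ b) then _ else _ : Fin N × Fin N) = (a, b)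
    simp only [Equiv.Perm.inv_def, Equiv.symm_apply_apply]
    rw [if_pos hp]
  · rw [if_neg h]
    show (if σ⁻¹ (σ b) < σ⁻¹ (σ a) then _ else _ : Fin N × Fin N) = (a, b)
    simp only [Equiv.Perm.inv_def, Equiv.symm_apply_apply]
    rw [if_neg (not_lt.mpr hp.le)]

lemma sum_emap {N : ℕ} (σ : Equiv.Perm (Fin N)) (F : Fin N × Fin N → ℤ) :
    ∑ p ∈ Ppairs N, F (emap σ p) = ∑ p ∈ Ppairs N, F p := by
  refine Finset.sum_nbij' (emap σ) (emap σ⁻¹)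
    (fun a ha => emap_mem σ ha) (fun a ha => emap_mem σ⁻¹ ha)
    (fun a ha => ?_) (fun a ha => ?_) (fun a _ => rfl)
  · obtain ⟨x, y⟩ := a
    exact emap_emap σ ((mem_Ppairs (x, y)).mp ha)
  · obtain ⟨x, y⟩ := a
    simpa using emap_emap σ⁻¹ ((mem_Ppairs (x, y)).mp ha)

lemma Sstat_eq {N : ℕ} (v : Fin N → ℕ) :
    Sstat v = ∑ p ∈ Ppairs N, epsInt ((v p.1 : ℤ) - (v p.2 : ℤ)) := rfl

/-- Key ordering fact: an adjacent transposition preserves strict order of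
all pairs except the pair being swapped. -/
lemma swap_order {n : ℕ} (m j : Fin (n + 1)) (hj : (j : ℕ) = (m : ℕ) + 1)
    {a b : Fin (n + 1)} (hab : a < b) (hne : ¬(a = m ∧ b = j)) :
    Equiv.swap m j a < Equiv.swap m j b := by
  have hab' : (a : ℕ) < (b : ℕ) := hab
  rcases eq_or_ne a m with rfl | ham
  · have hbj : b ≠ j := fun h => hne ⟨rfl, h⟩
    have hbj' : (b : ℕ) ≠ (j : ℕ) := fun h => hbj (Fin.ext h)
    rw [Equiv.swap_apply_left, Equiv.swap_apply_of_ne_of_ne hab.ne' hbj]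
    exact Fin.lt_def.mpr (by omega)
  · rcases eq_or_ne a j with rfl | haj
    · have hbm : b ≠ m := fun h => by
        have : (b : ℕ) = (m : ℕ) := congrArg Fin.val h
        omega
      rw [Equiv.swap_apply_right, Equiv.swap_apply_of_ne_of_ne hbm hab.ne']
      exact Fin.lt_def.mpr (by omega)
    · have ham' : (a : ℕ) ≠ (m : ℕ) := fun h => ham (Fin.ext h)
      rw [Equiv.swap_apply_of_ne_of_ne ham haj]
      rcases eq_or_ne b m with rfl | hbm
      · rw [Equiv.swap_apply_left]
        exact Fin.lt_def.mpr (by omega)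
      · rcases eq_or_ne b j with rfl | hbj
        · rw [Equiv.swap_apply_right]
          exact Fin.lt_def.mpr (by omega)
        · rw [Equiv.swap_apply_of_ne_of_ne hbm hbj]
          exact hab

lemma sstat_swap {n : ℕ} (v : Fin (n + 1) → ℕ) (m j : Fin (n + 1))
    (hj : (j : ℕ) = (m : ℕ) + 1) (hv : v m < v j) :
    Sstat (fun k => v (Equiv.swap m j k)) = Sstat v + 1 := by
  have hmj : m < j := Fin.lt_def.mpr (by omega)
  set σ := Equiv.swap m j with hσ
  set G : Fin (n + 1) × Fin (n + 1) → ℤ :=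
    fun q => epsInt ((v q.1 : ℤ) - (v q.2 : ℤ)) + if q = (m, j) then 1 else 0
    with hG
  have h1 : Sstat (fun k => v (σ k)) = ∑ p ∈ Ppairs (n + 1), G (emap σ p) := by
    rw [Sstat_eq]
    refine Finset.sum_congr rfl (fun p hp => ?_)
    obtain ⟨a, b⟩ := p
    rw [mem_Ppairs] at hp
    simp only at hp
    by_cases hpe : (a, b) = ((m : Fin (n + 1)), j)
    · have ha : a = m := congrArg Prod.fst hpe
      have hb : b = j := congrArg Prod.snd hpe
      subst ha; subst hb
      have e1 : σ a = b := Equiv.swap_apply_left a b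
      have e2 : σ b = a := Equiv.swap_apply_right a b
      have hemap : emap σ (a, b) = (a, b) := by
        show (if σ a < σ b then (σ a, σ b) else (σ b, σ a)) = (a, b)
        rw [e1, e2, if_neg (not_lt.mpr hp.le)]
      rw [hemap, hG]
      simp only [e1, e2]
      rw [if_pos trivial]
      have hpos : (0 : ℤ) < (v b : ℤ) - (v a : ℤ) := by
        have := hv; omega
      rw [show ((v a : ℤ) - (v b : ℤ)) = -((v b : ℤ) - (v a : ℤ)) by ring]
      exact epsInt_pos_eq _ hpos
    · have hkey : σ a < σ b := by
        apply swap_order m j hj hp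
        intro ⟨h1', h2'⟩
        exact hpe (by rw [h1', h2'])
      have hemap : emap σ (a, b) = (σ a, σ b) := by
        show (if σ a < σ b then (σ a, σ b) else (σ b, σ a)) = (σ a, σ b)
        rw [if_pos hkey]
      rw [hemap, hG]
      have hne2 : ((σ a : Fin (n + 1)), σ b) ≠ (m, j) := by
        intro h
        have h1' : σ a = m := congrArg Prod.fst h
        have h2' : σ b = j := congrArg Prod.snd h
        have haj : a = j := by
          have := congrArg σ.symm h1'
          simpa [hσ] using this
        have hbm : b = m := by
          have := congrArg σ.symm h2'
          simpa [hσ] using this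
        rw [haj, hbm] at hp
        exact absurd hp (not_lt.mpr hmj.le)
      simp only [if_neg hne2, add_zero]
  rw [h1, sum_emap σ G, hG, Finset.sum_add_distrib, ← Sstat_eq]
  have hone : ∑ p ∈ Ppairs (n + 1),
      (if p = ((m : Fin (n + 1)), j) then (1 : ℤ) else 0) = 1 := by
    rw [Finset.sum_ite_eq' (Ppairs (n + 1)) (m, j) (fun _ => (1 : ℤ))]
    rw [if_pos ((mem_Ppairs (m, j)).mpr hmj)]
  rw [hone]

lemma vPsi_apply_ne_last {n : ℕ} (v : Fin (n + 1) → ℕ) {i : Fin (n + 1)}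
    (h : i ≠ Fin.last n) : vPsi v i = v (finRotate (n + 1) i) := by
  have hi : (i : ℕ) < n := Fin.val_lt_last h
  unfold vPsi
  rw [dif_pos (by omega)]
  congr 1
  apply Fin.ext
  rw [coe_finRotate_of_ne_last h]

lemma vPsi_apply_last {n : ℕ} (v : Fin (n + 1) → ℕ) :
    vPsi v (Fin.last n) = v 0 + 1 := by
  unfold vPsi
  rw [dif_neg (by simp)]

lemma sum_vPsi {n : ℕ} (v : Fin (n + 1) → ℕ) :
    ∑ i, (vPsi v i : ℤ) = (∑ i, (v i : ℤ)) + 1 := by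
  have h1 : ∑ i, (vPsi v i : ℤ) =
      ∑ i, (((v (finRotate (n + 1) i) : ℤ)) + if i = Fin.last n then 1 else 0) := by
    refine Finset.sum_congr rfl (fun i _ => ?_)
    by_cases h : i = Fin.last n
    · subst h
      rw [vPsi_apply_last, if_pos rfl, finRotate_last]
      push_cast; ring
    · rw [vPsi_apply_ne_last v h, if_neg h, add_zero]
  rw [h1, Finset.sum_add_distrib,
    Equiv.sum_comp (finRotate (n + 1)) (fun i => (v i : ℤ))]
  simp

lemma sstat_vPsi {n : ℕ} (v : Fin (n + 1) → ℕ) : Sstat (vPsi v) = Sstat v := by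
  set ρ := finRotate (n + 1) with hρ
  set G : Fin (n + 1) × Fin (n + 1) → ℤ :=
    fun q => epsInt ((v q.1 : ℤ) - (v q.2 : ℤ)) with hG
  have h1 : Sstat (vPsi v) = ∑ p ∈ Ppairs (n + 1), G (emap ρ p) := by
    rw [Sstat_eq]
    refine Finset.sum_congr rfl (fun p hp => ?_)
    obtain ⟨a, b⟩ := p
    rw [mem_Ppairs] at hp
    simp only at hp
    have hp' : (a : ℕ) < (b : ℕ) := hp
    have h1last : a ≠ Fin.last n := by
      intro h
      have : (a : ℕ) = n := congrArg Fin.val h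
      have := b.isLt
      omega
    have hρ1 : (ρ a : ℕ) = (a : ℕ) + 1 := coe_finRotate_of_ne_last h1last
    by_cases h2last : b = Fin.last n
    · subst h2last
      have hρ2 : ρ (Fin.last n) = 0 := finRotate_last
      have hemap : emap ρ (a, Fin.last n) = (0, ρ a) := by
        show (if ρ a < ρ (Fin.last n) then (ρ a, ρ (Fin.last n))
          else (ρ (Fin.last n), ρ a)) = (0, ρ a)
        rw [hρ2, if_neg (not_lt.mpr (Fin.zero_le _))]
      rw [hemap, hG]
      simp only
      rw [vPsi_apply_ne_last v h1last, vPsi_apply_last]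
      rw [show ((v (ρ a) : ℤ)) - ((v 0 + 1 : ℕ) : ℤ) =
        ((v (ρ a) : ℤ) - (v 0 : ℤ)) - 1 by push_cast; ring]
      rw [epsInt_sub_one]
      congr 1
      ring
    · have h2lt : (b : ℕ) < n := Fin.val_lt_last h2last
      have hρ2 : (ρ b : ℕ) = (b : ℕ) + 1 := coe_finRotate_of_ne_last h2last
      have hcond : ρ a < ρ b := Fin.lt_def.mpr (by omega)
      have hemap : emap ρ (a, b) = (ρ a, ρ b) := by
        show (if ρ a < ρ b then (ρ a, ρ b) else (ρ b, ρ a)) = (ρ a, ρ b)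
        rw [if_pos hcond]
      rw [hemap, hG]
      simp only
      rw [vPsi_apply_ne_last v h1last, vPsi_apply_ne_last v h2last]
  rw [h1, sum_emap ρ G, hG, ← Sstat_eq]

/-- The length statistic `|v| + S(v)`. -/
def fwt {n : ℕ} (v : Fin (n + 1) → ℕ) : ℤ := (∑ i, (v i : ℤ)) + Sstat v

lemma fwt_step {n : ℕ} {v v' : Fin (n + 1) → ℕ} (h : WStep v v') :
    fwt v' = fwt v + 1 := by
  rcases h with ⟨m, j, hj, hv, rfl⟩ | rfl
  · unfold fwt
    rw [sstat_swap v m j hj hv]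
    have hsum : ∑ i, ((v (Equiv.swap m j i) : ℤ)) = ∑ i, (v i : ℤ) :=
      Equiv.sum_comp (Equiv.swap m j) (fun i => (v i : ℤ))
    rw [hsum]
    ring
  · unfold fwt
    rw [sum_vPsi, sstat_vPsi]
    ring

lemma fwt_chain {n : ℕ} (c : ℕ → Fin (n + 1) → ℕ) (k : ℕ)
    (h : ∀ t, t < k → WStep (c t) (c (t + 1))) :
    fwt (c k) = fwt (c 0) + k := by
  induction k with
  | zero => simp
  | succ k ih =>
    rw [fwt_step (h k (by omega)), ih (fun t ht => h t (by omega))]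
    push_cast
    ring

lemma fwt_zero {n : ℕ} : fwt (fun _ : Fin (n + 1) => 0) = 0 := by
  unfold fwt Sstat
  norm_num [epsInt]

/-- Every path of steps from the zero weight `0^N` to `v` has length
`|v| + S(v)`; in particular all paths of steps joining two given weights have
the same length. -/
theorem steps_count_eq_and_path_length_unique {n : ℕ} :
    (∀ (v : Fin (n + 1) → ℕ) (k : ℕ) (c : ℕ → Fin (n + 1) → ℕ),
      c 0 = (fun _ => 0) → (∀ t, t < k → WStep (c t) (c (t + 1))) → c k = v →
      (k : ℤ) = (∑ i, (v i : ℤ)) + Sstat v) ∧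
    (∀ (u v : Fin (n + 1) → ℕ) (k₁ k₂ : ℕ)
      (c₁ c₂ : ℕ → Fin (n + 1) → ℕ),
      c₁ 0 = u → c₂ 0 = u →
      (∀ t, t < k₁ → WStep (c₁ t) (c₁ (t + 1))) →
      (∀ t, t < k₂ → WStep (c₂ t) (c₂ (t + 1))) →
      c₁ k₁ = v → c₂ k₂ = v → k₁ = k₂) := by
  constructor
  · intro v k c h0 hstep hk
    have hc := fwt_chain c k hstep
    rw [h0, hk, fwt_zero] at hc
    have hv : fwt v = (k : ℤ) := by linarith
    rw [← hv]
    rfl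
  · intro u v k₁ k₂ c₁ c₂ h10 h20 hs1 hs2 hk1 hk2
    have e1 := fwt_chain c₁ k₁ hs1
    have e2 := fwt_chain c₂ k₂ hs2
    rw [h10, hk1] at e1
    rw [h20, hk2] at e2
    have : (k₁ : ℤ) = (k₂ : ℤ) := by linarith
    exact_mod_cast this
end
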